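/- Let n = 3 or n ≥ 5, and let F_q be a finite field whose characteristic does not divide n!/2. Let e be a nonzero central idempotent of the group algebra F_q A_n such that for every central idempotent f of F_q A_n either e·f = 0 or e·f = e, and suppose e ≠ Â_n, where Â_n = (n!/2)⁻¹·Σ_{σ∈A_n} σ. Then the map A_n → F_q A_n sending σ to σ·e is injective, and e·Â_n = 0. -/

import Mathlib

open Equiv Equiv.Perm Subgroup

-- Step A: a nontrivial normal subgroup contains a nontrivial element of small support
lemma stepA (n : ℕ) (hn5 : 5 ≤ n) (H : Subgroup (alternatingGroup (Fin n)))
    (hH : H.Normal) (hbot : H ≠ ⊥) :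
    ∃ (ρ : alternatingGroup (Fin n)) (T : Finset (Fin n)),
      ρ ∈ H ∧ ρ ≠ 1 ∧ T.card ≤ 5 ∧ (ρ : Perm (Fin n)).support ⊆ T := by
  obtain ⟨⟨σ, hσH⟩, hσ1⟩ := Subgroup.ne_bot_iff_exists_ne_one.mp hbot
  set s : Perm (Fin n) := (σ : Perm (Fin n)) with hs
  have hsign : Equiv.Perm.sign s = 1 := Equiv.Perm.mem_alternatingGroup.mp σ.2
  have hs1 : s ≠ 1 := by
    intro h
    apply hσ1
    ext1
    exact Subtype.ext h
  -- a point moved by s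
  have hex : ∃ a, s a ≠ a := by
    by_contra h
    push_neg at h
    exact hs1 (Equiv.ext h)
  -- helper to build the commutator
  have key : ∀ (x y z : Fin n), x ≠ y → y ≠ z → x ≠ z →
      ∀ (τ : alternatingGroup (Fin n)), (τ : Perm (Fin n)) = swap x y * swap y z →
      ∃ ρ : alternatingGroup (Fin n), ρ ∈ H ∧
        (ρ : Perm (Fin n)) = s⁻¹ * ((τ : Perm (Fin n)) * s * (τ : Perm (Fin n))⁻¹) ∧
        (ρ : Perm (Fin n)).support ⊆ ({s⁻¹ x, s⁻¹ y, s⁻¹ z, x, y, z} : Finset (Fin n)) := by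
    intro x y z hxy hyz hxz τ hτ
    refine ⟨σ⁻¹ * (τ * σ * τ⁻¹), mul_mem (inv_mem hσH) (hH.conj_mem _ hσH τ), by push_cast; group; rfl, ?_⟩
    have h1 : ((σ⁻¹ * (τ * σ * τ⁻¹) : alternatingGroup (Fin n)) : Perm (Fin n))
        = (s⁻¹ * (τ : Perm (Fin n)) * s) * (τ : Perm (Fin n))⁻¹ := by push_cast; group; rfl
    rw [h1]
    refine (Equiv.Perm.support_mul_le _ _).trans ?_
    have h2 : s⁻¹ * (τ : Perm (Fin n)) * s = s⁻¹ * (τ : Perm (Fin n)) * (s⁻¹)⁻¹ := by group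
    rw [h2, Equiv.Perm.support_conj, Equiv.Perm.support_inv]
    have hτs : (τ : Perm (Fin n)).support ⊆ ({x, y, z} : Finset (Fin n)) := by
      rw [hτ]
      refine (Equiv.Perm.support_mul_le _ _).trans ?_
      rw [Equiv.Perm.support_swap hxy, Equiv.Perm.support_swap hyz]
      intro w hw
      simp only [Finset.sup_eq_union, Finset.mem_union, Finset.mem_insert,
        Finset.mem_singleton] at hw ⊢
      tauto
    intro w hw
    simp only [Finset.sup_eq_union, Finset.mem_union, Finset.mem_map,
      Equiv.toEmbedding_apply] at hw
    rcases hw with ⟨v, hv, rfl⟩ | hw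
    · have := hτs hv
      simp only [Finset.mem_insert, Finset.mem_singleton] at this ⊢
      rcases this with rfl | rfl | rfl <;> simp
    · have := hτs hw
      simp only [Finset.mem_insert, Finset.mem_singleton] at this ⊢
      tauto
  by_cases hcase : ∃ a, s (s a) ≠ a
  · -- s has a cycle of length ≥ 3
    obtain ⟨a, ha2⟩ := hcase
    have ha : s a ≠ a := fun h => ha2 (by rw [h, h])
    have hab : a ≠ s a := Ne.symm ha
    have hsb : s (s a) ≠ s a := fun h => ha (s.injective h)
    -- choose c outside {a, s a, s (s a)}
    obtain ⟨c, hc⟩ : ∃ c, c ∉ ({a, s a, s (s a)} : Finset (Fin n)) := by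
      by_contra h
      push_neg at h
      have h1 : ({a, s a, s (s a)} : Finset (Fin n)) = Finset.univ :=
        Finset.eq_univ_iff_forall.mpr h
      have h2 : (({a, s a, s (s a)} : Finset (Fin n))).card ≤ 3 := by
        refine (Finset.card_insert_le _ _).trans ?_
        have := Finset.card_insert_le (s a) ({s (s a)} : Finset (Fin n))
        simp at this ⊢
        omega
      rw [h1, Finset.card_univ, Fintype.card_fin] at h2
      omega
    simp only [Finset.mem_insert, Finset.mem_singleton, not_or] at hc
    obtain ⟨hca, hcb, hcsb⟩ := hc
    have hbc : s a ≠ c := Ne.symm hcb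
    have hac : a ≠ c := Ne.symm hca
    have hmem : swap a (s a) * swap (s a) c ∈ alternatingGroup (Fin n) := by
      rw [Equiv.Perm.mem_alternatingGroup, map_mul,
        Equiv.Perm.sign_swap hab, Equiv.Perm.sign_swap hbc]
      decide
    obtain ⟨ρ, hρH, hρval, hρsupp⟩ := key a (s a) c hab hbc hac ⟨_, hmem⟩ rfl
    refine ⟨ρ, {s⁻¹ a, s⁻¹ c, a, s a, c}, hρH, ?_, ?_, ?_⟩
    · -- ρ ≠ 1
      intro h
      have hv : (ρ : Perm (Fin n)) = 1 := by rw [h]; rfl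
      rw [hρval] at hv
      set tp : Perm (Fin n) := swap a (s a) * swap (s a) c with htp
      have h' : tp * s * tp⁻¹ = s := by
        calc tp * s * tp⁻¹ = s * (s⁻¹ * (tp * s * tp⁻¹)) := by group
        _ = s * 1 := by rw [hv]
        _ = s := mul_one s
      have h'' := congrArg (fun p : Perm (Fin n) => p (s a)) h'
      simp only [htp, mul_inv_rev, Equiv.swap_inv, Equiv.Perm.mul_apply] at h''
      rw [Equiv.swap_apply_right a (s a), Equiv.swap_apply_of_ne_of_ne hab hac,
        Equiv.swap_apply_left, Equiv.swap_apply_of_ne_of_ne hca hcb] at h''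
      exact hcsb h''
    · -- card bound
      refine (Finset.card_insert_le _ _).trans ?_
      have h1 := Finset.card_insert_le (s⁻¹ c) ({a, s a, c} : Finset (Fin n))
      have h2 := Finset.card_insert_le a ({s a, c} : Finset (Fin n))
      have h3 := Finset.card_insert_le (s a) ({c} : Finset (Fin n))
      simp only [Finset.card_singleton] at h3
      omega
    · -- support subset
      intro w hw
      have hw' := hρsupp hw
      have hinv : s⁻¹ (s a) = a := s.symm_apply_apply a
      simp only [Finset.mem_insert, Finset.mem_singleton] at hw' ⊢
      rcases hw' with rfl | h | rfl | rfl | rfl | rfl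
      · tauto
      · rw [hinv] at h; tauto
      · tauto
      · tauto
      · tauto
      · tauto
  · -- s is an involution
    push_neg at hcase
    obtain ⟨a, ha⟩ := hex
    have hab : a ≠ s a := Ne.symm ha
    have hsba : s (s a) = a := hcase a
    -- find a second transposition
    obtain ⟨a', ha', ha'a, ha'b⟩ : ∃ a', s a' ≠ a' ∧ a' ≠ a ∧ a' ≠ s a := by
      by_contra h
      push_neg at h
      have hsupp : s.support = ({a, s a} : Finset (Fin n)) := by
        apply Finset.Subset.antisymm
        · intro x hx
          rw [Equiv.Perm.mem_support] at hx
          simp only [Finset.mem_insert, Finset.mem_singleton]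
          by_contra hx'
          push_neg at hx'
          exact hx'.2 (h x hx hx'.1)
        · intro x hx
          simp only [Finset.mem_insert, Finset.mem_singleton] at hx
          rw [Equiv.Perm.mem_support]
          rcases hx with rfl | rfl
          · exact ha
          · rw [hsba]; exact Ne.symm ha
      have hcard2 : s.support.card = 2 := by
        rw [hsupp, Finset.card_insert_of_notMem (by simpa using hab),
          Finset.card_singleton]
      obtain ⟨x, y, hxy, hsw⟩ := Equiv.Perm.card_support_eq_two.mp hcard2
      rw [hsw, Equiv.Perm.sign_swap hxy] at hsign
      exact (by decide : ¬((-1 : ℤˣ) = 1)) hsign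
    have hb'a' : s a' ≠ a' := ha'
    have hsb'a' : s (s a') = a' := hcase a'
    have hb'a : s a' ≠ a := by
      intro h
      apply ha'b
      rw [← h, hsb'a']
    have hb'b : s a' ≠ s a := fun h => ha'a (s.injective h)
    have hba' : s a ≠ a' := Ne.symm ha'b
    have haa' : a ≠ a' := Ne.symm ha'a
    have hmem : swap a (s a) * swap (s a) a' ∈ alternatingGroup (Fin n) := by
      rw [Equiv.Perm.mem_alternatingGroup, map_mul,
        Equiv.Perm.sign_swap hab, Equiv.Perm.sign_swap hba']
      decide
    obtain ⟨ρ, hρH, hρval, hρsupp⟩ := key a (s a) a' hab hba' haa' ⟨_, hmem⟩ rfl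
    refine ⟨ρ, {a, s a, a', s a'}, hρH, ?_, ?_, ?_⟩
    · -- ρ ≠ 1
      intro h
      have hv : (ρ : Perm (Fin n)) = 1 := by rw [h]; rfl
      rw [hρval] at hv
      set tp : Perm (Fin n) := swap a (s a) * swap (s a) a' with htp
      have h' : tp * s * tp⁻¹ = s := by
        calc tp * s * tp⁻¹ = s * (s⁻¹ * (tp * s * tp⁻¹)) := by group
        _ = s * 1 := by rw [hv]
        _ = s := mul_one s
      have h'' := congrArg (fun p : Perm (Fin n) => p (s a)) h'
      simp only [htp, mul_inv_rev, Equiv.swap_inv, Equiv.Perm.mul_apply] at h''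
      rw [Equiv.swap_apply_right a (s a), Equiv.swap_apply_of_ne_of_ne hab haa',
        Equiv.swap_apply_left, Equiv.swap_apply_of_ne_of_ne ha'a ha'b] at h''
      rw [hsba] at h''
      exact ha'a h''
    · -- card bound
      refine (Finset.card_insert_le _ _).trans ?_
      have h2 := Finset.card_insert_le (s a) ({a', s a'} : Finset (Fin n))
      have h3 := Finset.card_insert_le a' ({s a'} : Finset (Fin n))
      simp only [Finset.card_singleton] at h3
      omega
    · -- support subset
      intro w hw
      have hw' := hρsupp hw
      have h1 : s⁻¹ a = s a := by
        apply s.injective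
        rw [show s (s⁻¹ a) = a from s.apply_symm_apply a, hsba]
      have h2 : s⁻¹ (s a) = a := s.symm_apply_apply a
      have h3 : s⁻¹ a' = s a' := by
        apply s.injective
        rw [show s (s⁻¹ a') = a' from s.apply_symm_apply a', hsb'a']
      rw [h1, h2, h3] at hw'
      simp only [Finset.mem_insert, Finset.mem_singleton] at hw' ⊢
      tauto

lemma An_top (n : ℕ) (hn5 : 5 ≤ n) (H : Subgroup (alternatingGroup (Fin n)))
    (hH : H.Normal) (hbot : H ≠ ⊥) : H = ⊤ := by
  classical
  obtain ⟨ρ, T, hρH, hρ1, hT5, hsupp⟩ := stepA n hn5 H hH hbot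
  obtain ⟨S, hTS, hS5⟩ := Finset.exists_superset_card_eq hT5
    (by rw [Fintype.card_fin]; exact hn5)
  have hsuppS : (ρ : Perm (Fin n)).support ⊆ S := hsupp.trans hTS
  let f : Fin 5 ≃ {x : Fin n // x ∈ S} := (S.equivFinOfCardEq hS5).symm
  let φ : Perm (Fin 5) →* Perm (Fin n) := Equiv.Perm.extendDomainHom f
  have hφmem : ∀ g : alternatingGroup (Fin 5),
      φ ((alternatingGroup (Fin 5)).subtype g) ∈ alternatingGroup (Fin n) := by
    intro g
    rw [Equiv.Perm.mem_alternatingGroup]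
    show Equiv.Perm.sign ((g : Perm (Fin 5)).extendDomain f) = 1
    rw [Equiv.Perm.sign_extendDomain]
    exact Equiv.Perm.mem_alternatingGroup.mp g.2
  let ψ : alternatingGroup (Fin 5) →* alternatingGroup (Fin n) :=
    (φ.comp (alternatingGroup (Fin 5)).subtype).codRestrict _ hφmem
  have hψval : ∀ g : alternatingGroup (Fin 5),
      (ψ g : Perm (Fin n)) = (g : Perm (Fin 5)).extendDomain f := fun g => rfl
  have hψinj : Function.Injective ψ := by
    intro g h hg
    have h1 : (ψ g : Perm (Fin n)) = (ψ h : Perm (Fin n)) := congrArg Subtype.val hg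
    rw [hψval, hψval] at h1
    exact Subtype.ext (Equiv.Perm.extendDomainHom_injective f h1)
  set K := ψ.range with hK
  -- K is nontrivial and simple
  haveI hKnt : Nontrivial K := by
    refine ⟨⟨ψ ⟨finRotate 5, finRotate_bit1_mem_alternatingGroup (n := 2)⟩, ⟨_, rfl⟩⟩, 1, ?_⟩
    intro hcon
    have h1 : ψ ⟨finRotate 5, _⟩ = 1 := congrArg Subtype.val hcon
    have h2 := hψinj (h1.trans (map_one ψ).symm)
    have h3 : finRotate 5 = 1 := congrArg Subtype.val h2
    exact (by decide : finRotate 5 ≠ 1) h3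
  haveI hKsimple : IsSimpleGroup K :=
    IsSimpleGroup.isSimpleGroup_of_surjective ψ.rangeRestrict ψ.rangeRestrict_surjective
  -- ρ belongs to K
  have hρK : ρ ∈ K := by
    have hpres : ∀ x : Fin n, x ∈ S ↔ (ρ : Perm (Fin n)) x ∈ S := by
      intro x
      constructor
      · intro hx
        by_cases hxs : x ∈ (ρ : Perm (Fin n)).support
        · exact hsuppS (Equiv.Perm.apply_mem_support.mpr hxs)
        · rw [Equiv.Perm.notMem_support.mp hxs]; exact hx
      · intro hx
        by_contra hxS
        have hfix : (ρ : Perm (Fin n)) x = x :=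
          Equiv.Perm.notMem_support.mp (fun hc => hxS (hsuppS hc))
        rw [hfix] at hx
        exact hxS hx
    let c0 : Perm {x : Fin n // x ∈ S} := (ρ : Perm (Fin n)).subtypePerm (fun x => (hpres x).symm)
    let e5 : Perm (Fin 5) := f.permCongr.symm c0
    have hext : e5.extendDomain f = (ρ : Perm (Fin n)) := by
      apply Equiv.ext
      intro x
      by_cases hx : x ∈ S
      · rw [Equiv.Perm.extendDomain_apply_subtype _ f hx]
        simp only [e5, Equiv.permCongr_symm, Equiv.permCongr_apply, Equiv.symm_symm,
          Equiv.apply_symm_apply]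
        rfl
      · rw [Equiv.Perm.extendDomain_apply_not_subtype _ f hx]
        exact (Equiv.Perm.notMem_support.mp (fun hc => hx (hsuppS hc))).symm
      
    have he5 : e5 ∈ alternatingGroup (Fin 5) := by
      rw [Equiv.Perm.mem_alternatingGroup]
      have := Equiv.Perm.sign_extendDomain e5 f
      rw [hext] at this
      rw [← this]
      exact Equiv.Perm.mem_alternatingGroup.mp ρ.2
    exact ⟨⟨e5, he5⟩, Subtype.ext (by rw [hψval]; exact hext)⟩
  -- H ∩ K is a nontrivial normal subgroup of K, hence K ≤ H
  have hKH : K ≤ H := by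
    have hnormal : (H.subgroupOf K).Normal := hH.subgroupOf K
    rcases hnormal.eq_bot_or_eq_top with hb | ht
    · exfalso
      have : (⟨ρ, hρK⟩ : K) ∈ H.subgroupOf K := by
        rw [Subgroup.mem_subgroupOf]
        exact hρH
      rw [hb, Subgroup.mem_bot] at this
      exact hρ1 (congrArg Subtype.val this)
    · exact Subgroup.subgroupOf_eq_top.mp ht
  -- K contains a three-cycle
  have h012 : ((0 : Fin 5) ≠ 1) ∧ ((0 : Fin 5) ≠ 2) ∧ ((1 : Fin 5) ≠ 2) := by decide
  have ht5 : (swap (0 : Fin 5) 1 * swap 0 2).IsThreeCycle :=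
    Equiv.Perm.isThreeCycle_swap_mul_swap_same h012.1 h012.2.1 h012.2.2
  let t : alternatingGroup (Fin 5) := ⟨_, ht5.mem_alternatingGroup⟩
  have htH : ψ t ∈ H := hKH ⟨t, rfl⟩
  have ht3 : ((ψ t : alternatingGroup (Fin n)) : Perm (Fin n)).IsThreeCycle := by
    show Equiv.Perm.cycleType _ = {3}
    rw [hψval, Equiv.Perm.cycleType_extendDomain]
    exact ht5
  have hclos := ht3.alternating_normalClosure (by rw [Nat.card_fin]; exact hn5)
  rw [eq_top_iff, ← hclos]
  apply Subgroup.normalClosure_le_normal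
  intro x hx
  rw [Set.mem_singleton_iff] at hx
  subst hx
  exact htH

lemma An_normal_bot_or_top (n : ℕ) (hn : n = 3 ∨ 5 ≤ n)
    (H : Subgroup (alternatingGroup (Fin n))) (hH : H.Normal) : H = ⊥ ∨ H = ⊤ := by
  rcases hn with rfl | hn5
  · haveI : Fact (Nat.Prime 3) := ⟨by norm_num⟩
    haveI : IsSimpleGroup (alternatingGroup (Fin 3)) := by
      apply isSimpleGroup_of_prime_card (p := 3)
      have h2 : 2 * Fintype.card (alternatingGroup (Fin 3))
          = Fintype.card (Perm (Fin 3)) := two_mul_card_alternatingGroup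
      rw [Fintype.card_perm, Fintype.card_fin] at h2
      have h3 : (3 : ℕ).factorial = 6 := rfl
      rw [Nat.card_eq_fintype_card]
      omega
    exact hH.eq_bot_or_eq_top
  · by_cases hb : H = ⊥
    · exact Or.inl hb
    · exact Or.inr (An_top n hn5 H hH hb)

section GroupAlgebra

variable {F : Type*} [Field F] {G : Type*} [Group G] [Fintype G] [DecidableEq G]

/-- The sum of all group elements in the group algebra. -/
noncomputable def sumAll (F : Type*) [Field F] (G : Type*) [Group G] [Fintype G] :
    MonoidAlgebra F G :=
  ∑ g : G, MonoidAlgebra.of F G g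

lemma of_mul_sumAll (g : G) : MonoidAlgebra.of F G g * sumAll F G = sumAll F G := by
  rw [sumAll, Finset.mul_sum]
  rw [← Fintype.sum_equiv (Equiv.mulLeft g) _ (fun h => MonoidAlgebra.of F G h) (fun h => rfl)]
  exact Finset.sum_congr rfl fun h _ => (map_mul (MonoidAlgebra.of F G) g h).symm

lemma sumAll_mul_of (g : G) : sumAll F G * MonoidAlgebra.of F G g = sumAll F G := by
  rw [sumAll, Finset.sum_mul]
  rw [← Fintype.sum_equiv (Equiv.mulRight g) _ (fun h => MonoidAlgebra.of F G h) (fun h => rfl)]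
  exact Finset.sum_congr rfl fun h _ => (map_mul (MonoidAlgebra.of F G) h g).symm

lemma mul_sumAll (x : MonoidAlgebra F G) :
    x * sumAll F G = (∑ a ∈ x.coeff.support, x.coeff a) • sumAll F G := by
  conv_lhs => rw [← MonoidAlgebra.sum_coeff_single x]
  rw [Finsupp.sum, Finset.sum_mul, Finset.sum_smul]
  refine Finset.sum_congr rfl fun a _ => ?_
  have h1 : (MonoidAlgebra.single a (x.coeff a) : MonoidAlgebra F G)
      = x.coeff a • MonoidAlgebra.of F G a := by
    rw [MonoidAlgebra.of_apply, MonoidAlgebra.smul_single, smul_eq_mul, mul_one]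
  rw [h1, smul_mul_assoc, of_mul_sumAll]

lemma sumAll_mul (x : MonoidAlgebra F G) :
    sumAll F G * x = (∑ a ∈ x.coeff.support, x.coeff a) • sumAll F G := by
  conv_lhs => rw [← MonoidAlgebra.sum_coeff_single x]
  rw [Finsupp.sum, Finset.mul_sum, Finset.sum_smul]
  refine Finset.sum_congr rfl fun a _ => ?_
  have h1 : (MonoidAlgebra.single a (x.coeff a) : MonoidAlgebra F G)
      = x.coeff a • MonoidAlgebra.of F G a := by
    rw [MonoidAlgebra.of_apply, MonoidAlgebra.smul_single, smul_eq_mul, mul_one]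
  rw [h1, mul_smul_comm, sumAll_mul_of]

lemma sumAll_mul_sumAll :
    sumAll F G * sumAll F G = (Fintype.card G : F) • sumAll F G := by
  have hs : sumAll F G * sumAll F G
      = ∑ g : G, MonoidAlgebra.of F G g * sumAll F G := by
    rw [sumAll, Finset.sum_mul]
  rw [hs]
  have h1 : ∀ g : G, g ∈ Finset.univ →
      MonoidAlgebra.of F G g * sumAll F G = sumAll F G := fun g _ => of_mul_sumAll g
  rw [Finset.sum_congr rfl h1, Finset.sum_const, Finset.card_univ,
    Nat.cast_smul_eq_nsmul]

lemma sumAll_ne_zero : sumAll F G ≠ 0 := by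
  intro h
  have h1 := congrArg (fun y : MonoidAlgebra F G => y.coeff 1) h
  simp only [sumAll, MonoidAlgebra.coeff_zero, Finsupp.coe_zero, Pi.zero_apply] at h1
  rw [MonoidAlgebra.coeff_sum, Finsupp.finset_sum_apply] at h1
  have h2 : ∀ g : G, (MonoidAlgebra.of F G g).coeff 1 = if g = 1 then (1 : F) else 0 := by
    intro g
    rw [MonoidAlgebra.of_apply, MonoidAlgebra.coeff_single, Finsupp.single_apply]
  rw [Finset.sum_congr rfl fun g _ => h2 g, Finset.sum_ite_eq' Finset.univ 1 fun _ => (1 : F)]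
    at h1
  simp at h1

end GroupAlgebra

/-- `Â_n = (n!/2)⁻¹ Σ_{σ∈A_n} σ` in the group algebra `F_q A_n`. -/
noncomputable def altHat (F : Type*) [Field F] (n : ℕ) :
    MonoidAlgebra F (alternatingGroup (Fin n)) :=
  ((n.factorial / 2 : ℕ) : F)⁻¹ •
    ∑ᶠ σ : alternatingGroup (Fin n), MonoidAlgebra.of F (alternatingGroup (Fin n)) σ

/-- Let `n = 3` or `n ≥ 5` and let `F_q` be a finite field whose characteristic does not
divide `n!/2`. Every centrally primitive central idempotent `e ≠ Â_n` of `F_q A_n`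
yields an injective map `σ ↦ σ·e`, and satisfies `e·Â_n = 0`. -/
theorem stmt13 (n : ℕ) (hn : n = 3 ∨ 5 ≤ n)
    (F : Type*) [Field F] [Fintype F]
    (hchar : ¬ (ringChar F ∣ n.factorial / 2))
    (e : MonoidAlgebra F (alternatingGroup (Fin n))) (he : IsIdempotentElem e)
    (hne : e ≠ 0)
    (hcentral : ∀ x : MonoidAlgebra F (alternatingGroup (Fin n)), e * x = x * e)
    (hprim : ∀ f : MonoidAlgebra F (alternatingGroup (Fin n)), IsIdempotentElem f →
      (∀ x : MonoidAlgebra F (alternatingGroup (Fin n)), f * x = x * f) →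
      e * f = 0 ∨ e * f = e)
    (hneA : e ≠ altHat F n) :
    Function.Injective (fun σ : alternatingGroup (Fin n) =>
      MonoidAlgebra.of F (alternatingGroup (Fin n)) σ * e) ∧
    e * altHat F n = 0 := by
  classical
  have hn3 : 3 ≤ n := by rcases hn with rfl | h <;> omega
  haveI : Nontrivial (Fin n) := ⟨⟨0, by omega⟩, ⟨1, by omega⟩, by simp [Fin.ext_iff]⟩
  set of' := MonoidAlgebra.of F (alternatingGroup (Fin n)) with hof
  have hcardG : Fintype.card (alternatingGroup (Fin n)) = n.factorial / 2 := by
    have h2 : 2 * Fintype.card (alternatingGroup (Fin n)) = Fintype.card (Perm (Fin n)) :=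
      two_mul_card_alternatingGroup
    rw [Fintype.card_perm, Fintype.card_fin] at h2
    have h3 : 2 ∣ n.factorial := (Nat.dvd_factorial (by omega) (by omega) : 2 ∣ n.factorial)
    omega
  set c : F := ((n.factorial / 2 : ℕ) : F) with hcdef
  have hc0 : c ≠ 0 := fun h => hchar ((ringChar.spec F _).mp h)
  have hAhat : altHat F n = c⁻¹ • sumAll F (alternatingGroup (Fin n)) := by
    rw [altHat, finsum_eq_sum_of_fintype, sumAll]
  have hcardF : (Fintype.card (alternatingGroup (Fin n)) : F) = c := by
    rw [hcardG]
  have hAidem : IsIdempotentElem (altHat F n) := by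
    rw [IsIdempotentElem, hAhat, smul_mul_assoc, mul_smul_comm, sumAll_mul_sumAll, hcardF,
      smul_smul, smul_smul]
    congr 1
    field_simp
  have hAcentral : ∀ x, altHat F n * x = x * altHat F n := by
    intro x
    rw [hAhat, smul_mul_assoc, mul_smul_comm, sumAll_mul, mul_sumAll]
  have hEA : e * altHat F n = 0 := by
    rcases hprim (altHat F n) hAidem hAcentral with h | h
    · exact h
    · exfalso
      apply hneA
      set d : F := c⁻¹ * (∑ a ∈ e.coeff.support, e.coeff a) with hd
      have he' : e = d • sumAll F (alternatingGroup (Fin n)) := by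
        conv_lhs => rw [← h]
        rw [hAhat, mul_smul_comm, mul_sumAll, smul_smul]
      have hd2 : (d * d * c) • sumAll F (alternatingGroup (Fin n))
          = d • sumAll F (alternatingGroup (Fin n)) := by
        have hee : e * e = e := he
        conv_rhs at hee => rw [he']
        conv_lhs at hee => rw [he', smul_mul_assoc, mul_smul_comm, sumAll_mul_sumAll,
          hcardF, smul_smul, smul_smul]
        exact hee
      have hd0 : d ≠ 0 := by
        intro h0
        rw [h0, zero_smul] at he'
        exact hne he'
      have hdc : d * (d * c) = d := by
        rw [mul_assoc] at hd2
        have hsub : (d * (d * c) - d) • sumAll F (alternatingGroup (Fin n)) = 0 := by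
          rw [sub_smul, hd2, sub_self]
        rcases smul_eq_zero.mp hsub with h' | h'
        · exact sub_eq_zero.mp h'
        · exact absurd h' sumAll_ne_zero
      have hdc1 : d * c = 1 := mul_left_cancel₀ hd0 (hdc.trans (mul_one d).symm)
      have hdinv : d = c⁻¹ := by
        calc d = d * c * c⁻¹ := by rw [mul_assoc, mul_inv_cancel₀ hc0, mul_one]
        _ = c⁻¹ := by rw [hdc1, one_mul]
      rw [he', hdinv, hAhat]
  refine ⟨?_, hEA⟩
  let N : Subgroup (alternatingGroup (Fin n)) :=
    { carrier := {g | of' g * e = e}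
      one_mem' := by
        show of' 1 * e = e
        rw [map_one, one_mul]
      mul_mem' := by
        intro a b ha hb
        show of' (a * b) * e = e
        have ha' : of' a * e = e := ha
        have hb' : of' b * e = e := hb
        rw [map_mul, mul_assoc, hb', ha']
      inv_mem' := by
        intro a ha
        have ha' : of' a * e = e := ha
        show of' a⁻¹ * e = e
        conv_lhs => rw [← ha']
        rw [← mul_assoc, ← map_mul, inv_mul_cancel, map_one, one_mul] }
  have hNnormal : N.Normal := by
    constructor
    intro a ha g
    have ha' : of' a * e = e := ha
    show of' (g * a * g⁻¹) * e = e
    calc of' (g * a * g⁻¹) * e = of' g * (of' a * (of' g⁻¹ * e)) := by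
          rw [map_mul, map_mul, mul_assoc, mul_assoc]
    _ = of' g * (of' a * (e * of' g⁻¹)) := by rw [← hcentral]
    _ = of' g * ((of' a * e) * of' g⁻¹) := by rw [mul_assoc]
    _ = of' g * (e * of' g⁻¹) := by rw [ha']
    _ = of' g * (of' g⁻¹ * e) := by rw [hcentral]
    _ = (of' g * of' g⁻¹) * e := by rw [mul_assoc]
    _ = e := by rw [← map_mul, mul_inv_cancel, map_one, one_mul]
  rcases An_normal_bot_or_top n hn N hNnormal with hbot | htop
  · intro g h hgh
    have hgh' : of' g * e = of' h * e := hgh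
    have hmem : h⁻¹ * g ∈ N := by
      show of' (h⁻¹ * g) * e = e
      rw [map_mul, mul_assoc, hgh', ← mul_assoc, ← map_mul, inv_mul_cancel, map_one, one_mul]
    rw [hbot, Subgroup.mem_bot] at hmem
    exact (inv_mul_eq_one.mp hmem).symm
  · exfalso
    have hall : ∀ g : alternatingGroup (Fin n), of' g * e = e := by
      intro g
      have : g ∈ N := htop ▸ Subgroup.mem_top g
      exact this
    have hSe : sumAll F (alternatingGroup (Fin n)) * e = c • e := by
      rw [sumAll, Finset.sum_mul]
      rw [Finset.sum_congr rfl fun g _ => hall g, Finset.sum_const, Finset.card_univ,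
        ← Nat.cast_smul_eq_nsmul (R := F), hcardF]
    have hAe : altHat F n * e = e := by
      rw [hAhat, smul_mul_assoc, hSe, smul_smul, inv_mul_cancel₀ hc0, one_smul]
    exact hne (by rw [← hAe, ← hcentral, hEA])
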